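/- Let A be an associative (not necessarily commutative) k-algebra and L, Z ∈ A elements satisfying LZ − ZL = Z. Define l_m = L(ZL)^m for integers m ≥ 0. Then for all m, n ≥ 0: l_m l_n − l_n l_m = (n − m) l_{m+n}. -/
import Mathlib

lemma virasoro_aux {A : Type} [Ring A] (L W : A) (hw : L * W - W * L = W) (n : ℕ) :
    L * W ^ n = W ^ n * L + (n : ℤ) • W ^ n := by
  have hLW : L * W = W * L + W := by rw [add_comm, ← sub_eq_iff_eq_add]; exact hw
  induction n with
  | zero => simp
  | succ n ih =>
    calc L * W ^ (n + 1) = (L * W ^ n) * W := by rw [pow_succ, mul_assoc]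
      _ = (W ^ n * L + (n : ℤ) • W ^ n) * W := by rw [ih]
      _ = W ^ n * (L * W) + (n : ℤ) • (W ^ n * W) := by
          rw [add_mul, smul_mul_assoc, mul_assoc]
      _ = W ^ n * (W * L + W) + (n : ℤ) • (W ^ n * W) := by rw [hLW]
      _ = W ^ (n + 1) * L + ((n : ℕ) + 1 : ℤ) • W ^ (n + 1) := by
          rw [mul_add, ← mul_assoc, ← pow_succ, add_smul, one_smul]
          abel
      _ = W ^ (n + 1) * L + ((n + 1 : ℕ) : ℤ) • W ^ (n + 1) := by push_cast; rfl

/-- Abstract Virasoro bracket relation: in an associative `k`-algebra, if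
`L Z - Z L = Z` and `l_m = L (Z L)^m`, then `l_m l_n - l_n l_m = (n - m) l_{m+n}`. -/
theorem virasoro_bracket {k A : Type} [CommRing k] [Ring A] [Algebra k A]
    (L Z : A) (h : L * Z - Z * L = Z) (m n : ℕ) :
    (L * (Z * L) ^ m) * (L * (Z * L) ^ n) - (L * (Z * L) ^ n) * (L * (Z * L) ^ m)
      = ((n : ℤ) - (m : ℤ)) • (L * (Z * L) ^ (m + n)) := by
  set W := Z * L with hW
  have hw : L * W - W * L = W := by
    have h2 : (L * Z - Z * L) * L = Z * L := by rw [h]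
    rw [sub_mul, mul_assoc, mul_assoc] at h2
    rw [hW, ← mul_assoc L Z L, mul_assoc Z L L, mul_assoc L Z L]
    exact h2
  have key : ∀ a b : ℕ, (L * W ^ a) * (L * W ^ b)
      = L * (L * W ^ (a + b)) - (a : ℤ) • (L * W ^ (a + b)) := by
    intro a b
    have hc : W ^ a * L = L * W ^ a - (a : ℤ) • W ^ a := by
      rw [virasoro_aux L W hw a]; abel
    calc (L * W ^ a) * (L * W ^ b) = L * ((W ^ a * L) * W ^ b) := by
          rw [mul_assoc, ← mul_assoc (W ^ a)]
      _ = L * ((L * W ^ a - (a : ℤ) • W ^ a) * W ^ b) := by rw [hc]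
      _ = _ := by
          rw [sub_mul, smul_mul_assoc, mul_assoc, ← pow_add, mul_sub, mul_smul_comm]
  rw [key m n, key n m, add_comm n m, sub_smul]
  abel
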